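/- In a regular ACM M_{1,b}, if x ∈ M_{1,b} has prime factorization x = p₁^{e₁} ⋯ p_n^{e_n} in ℤ, then the omega primality of x in M_{1,b} equals e₁ + ⋯ + e_n. -/

import Mathlib

/-- Membership in the arithmetical congruence monoid `M_{a,b} = (a + b ℕ₀) ∪ {1}`. -/
def acmMem (a b x : ℕ) : Prop := x = 1 ∨ ∃ k : ℕ, x = a + k * b

/-- `x` is an atom (irreducible) of `M_{a,b}`. -/
def acmAtom (a b x : ℕ) : Prop :=
  acmMem a b x ∧ x ≠ 1 ∧
    ∀ y z : ℕ, acmMem a b y → acmMem a b z → x = y * z → y = 1 ∨ z = 1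

/-- `s` is a factorization of `x` into atoms of `M_{a,b}`. -/
def acmFactorization (a b x : ℕ) (s : Multiset ℕ) : Prop :=
  (∀ u ∈ s, acmAtom a b u) ∧ s.prod = x

/-- The distance between two factorizations. -/
def facDist (s t : Multiset ℕ) : ℕ := max (Multiset.card (s - t)) (Multiset.card (t - s))

/-- There is an `N`-chain of factorizations of `x` from `z₁` to `z₂` in `M_{a,b}`. -/
def acmNChain (a b x N : ℕ) (z₁ z₂ : Multiset ℕ) : Prop :=
  ∃ L : List (Multiset ℕ), L ≠ [] ∧ L.head? = some z₁ ∧ L.getLast? = some z₂ ∧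
    (∀ z ∈ L, acmFactorization a b x z) ∧ L.Chain' (fun s t => facDist s t ≤ N)

/-- The set of `N` such that any two factorizations of any element of `M_{a,b}`
are connected by an `N`-chain; `c(M) = n` iff `n` is the least element of this set. -/
def acmCatSet (a b : ℕ) : Set ℕ :=
  {N | ∀ x, acmMem a b x → ∀ z₁ z₂, acmFactorization a b x z₁ →
      acmFactorization a b x z₂ → acmNChain a b x N z₁ z₂}

/-- Divisibility inside the monoid `M_{a,b}`. -/
def acmDvd (a b x y : ℕ) : Prop := ∃ k, acmMem a b k ∧ x * k = y

/-- `s` is a bullet of `x` in `M_{a,b}`. -/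
def acmBullet (a b x : ℕ) (s : Multiset ℕ) : Prop :=
  (∀ u ∈ s, acmAtom a b u) ∧ acmDvd a b x s.prod ∧
    ∀ t : Multiset ℕ, t ≤ s → t ≠ s → ¬ acmDvd a b x t.prod

/-- Omega primality of `x` in `M_{a,b}`: the sup of the lengths of bullets of `x`. -/
noncomputable def acmOmega (a b x : ℕ) : ℕ∞ :=
  sSup {n : ℕ∞ | ∃ s : Multiset ℕ, acmBullet a b x s ∧ (Multiset.card s : ℕ∞) = n}

/-- The set of factorization lengths of `x` in `M_{a,b}`. -/
def acmLengthSet (a b x : ℕ) : Set ℕ :=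
  {n | ∃ s : Multiset ℕ, acmFactorization a b x s ∧ Multiset.card s = n}

/-- `x` has at least two distinct factorization lengths. -/
def acmLI (a b x : ℕ) : Prop := ∃ m ∈ acmLengthSet a b x, ∃ n ∈ acmLengthSet a b x, m ≠ n

/-- The length density of an element `x` of `M_{a,b}`. -/
noncomputable def acmLD (a b x : ℕ) : ℝ :=
  (((acmLengthSet a b x).ncard : ℝ) - 1) /
    (((sSup (acmLengthSet a b x) : ℕ) : ℝ) - ((sInf (acmLengthSet a b x) : ℕ) : ℝ))


variable {b : ℕ}

lemma acm_mem_iff (hb : 1 < b) {x : ℕ} : acmMem 1 b x ↔ x % b = 1 := by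
  constructor
  · rintro (rfl | ⟨k, rfl⟩)
    · exact Nat.one_mod_eq_one.mpr (by omega)
    · simp [Nat.add_mul_mod_self_right, Nat.one_mod_eq_one.mpr (by omega : b ≠ 1)]
  · intro h
    right
    have := Nat.mod_add_div x b
    exact ⟨x / b, by rw [Nat.mul_comm]; omega⟩

lemma acm_mem_pos {x : ℕ} (hx : acmMem 1 b x) : 0 < x := by
  rcases hx with rfl | ⟨k, rfl⟩ <;> omega

lemma acm_mem_mul (hb : 1 < b) {x y : ℕ} (hx : acmMem 1 b x) (hy : acmMem 1 b y) :
    acmMem 1 b (x * y) := by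
  rw [acm_mem_iff hb] at *
  conv_lhs => rw [Nat.mul_mod, hx, hy]
  simpa using Nat.one_mod_eq_one.mpr (by omega)

lemma acm_prod_mem (hb : 1 < b) {s : Multiset ℕ} (hs : ∀ u ∈ s, acmMem 1 b u) :
    acmMem 1 b s.prod := by
  induction s using Multiset.induction with
  | empty => exact Or.inl (by simp)
  | cons a t ih =>
    rw [Multiset.prod_cons]
    exact acm_mem_mul hb (hs a (Multiset.mem_cons_self a t))
      (ih fun u hu => hs u (Multiset.mem_cons_of_mem hu))

lemma acm_modeq_one (hb : 1 < b) {x : ℕ} (hx : acmMem 1 b x) : x ≡ 1 [MOD b] := by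
  rw [acm_mem_iff hb] at hx
  unfold Nat.ModEq
  rw [hx, Nat.one_mod_eq_one.mpr (by omega)]

lemma acm_dvd_iff (hb : 1 < b) {x y : ℕ} (hx : acmMem 1 b x) (hy : acmMem 1 b y) :
    acmDvd 1 b x y ↔ x ∣ y := by
  constructor
  · rintro ⟨k, _, rfl⟩; exact Dvd.intro k rfl
  · rintro ⟨k, rfl⟩
    refine ⟨k, ?_, rfl⟩
    rw [acm_mem_iff hb]
    have h1 : x * k ≡ 1 * k [MOD b] := (acm_modeq_one hb hx).mul_right k
    have h2 : x * k ≡ 1 [MOD b] := acm_modeq_one hb hy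
    rw [one_mul] at h1
    have : k ≡ 1 [MOD b] := h1.symm.trans h2
    calc k % b = 1 % b := this
    _ = 1 := Nat.one_mod_eq_one.mpr (by omega)


lemma acm_upper : ∀ (n x : ℕ), 0 < x → ∀ s : Multiset ℕ, Multiset.card s = n →
    (∀ u ∈ s, u ≠ 0) → x ∣ s.prod → (∀ t ≤ s, t ≠ s → ¬ x ∣ t.prod) →
    n ≤ x.primeFactorsList.length := by
  intro n
  induction n with
  | zero => intros; exact Nat.zero_le _
  | succ n ih =>
    intro x hx s hcard hs0 hdvd hmin
    obtain ⟨a, ha⟩ : ∃ a, a ∈ s :=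
      Multiset.exists_mem_of_ne_zero (by rintro rfl; simp at hcard)
    obtain ⟨t, rfl⟩ := Multiset.exists_cons_of_mem ha
    have ha0 : a ≠ 0 := hs0 a (Multiset.mem_cons_self a t)
    have htprod0 : t.prod ≠ 0 := by
      have : 0 < t.prod := Multiset.prod_pos fun u hu =>
        Nat.pos_of_ne_zero (hs0 u (Multiset.mem_cons_of_mem hu))
      omega
    have htne : t ≠ a ::ₘ t := by
      intro h
      have := congrArg Multiset.card h
      simp at this
    set g := Nat.gcd x a with hg
    have hgx : g ∣ x := Nat.gcd_dvd_left x a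
    have hga : g ∣ a := Nat.gcd_dvd_right x a
    have hg0 : 0 < g := Nat.gcd_pos_of_pos_left a hx
    have hdvd2 : x ∣ a * t.prod := by rwa [Multiset.prod_cons] at hdvd
    have hg1 : g ≠ 1 := by
      intro h1
      exact hmin t (Multiset.le_cons_self t a) htne
        (Nat.Coprime.dvd_of_dvd_mul_left h1 hdvd2)
    set x' := x / g with hx'
    have hx'g : x' * g = x := Nat.div_mul_cancel hgx
    have hx'0 : 0 < x' := Nat.div_pos (Nat.le_of_dvd hx hgx) hg0
    have hdvd' : x' ∣ t.prod := by
      rw [← Nat.factorization_le_iff_dvd hx'0.ne' htprod0]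
      have hfac : x.factorization ≤ a.factorization + t.prod.factorization := by
        rw [← Nat.factorization_mul ha0 htprod0]
        exact (Nat.factorization_le_iff_dvd hx.ne' (mul_ne_zero ha0 htprod0)).mpr hdvd2
      rw [hx', Nat.factorization_div hgx, hg, Nat.factorization_gcd hx.ne' ha0]
      intro p
      have h1 := hfac p
      simp only [Finsupp.tsub_apply, Finsupp.inf_apply, Finsupp.add_apply] at *
      omega
    have hmin' : ∀ t' ≤ t, t' ≠ t → ¬ x' ∣ t'.prod := by
      intro t' hle hne hd
      refine hmin (a ::ₘ t') (Multiset.cons_le_cons a hle)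
        (fun h => hne (by simpa using h)) ?_
      rw [Multiset.prod_cons, ← hx'g, mul_comm x' g]
      exact mul_dvd_mul hga hd
    have hmain := ih x' hx'0 t (by simpa using hcard)
      (fun u hu => hs0 u (Multiset.mem_cons_of_mem hu)) hdvd' hmin'
    have hperm := Nat.perm_primeFactorsList_mul hx'0.ne' hg0.ne'
    have hlen : x.primeFactorsList.length
        = x'.primeFactorsList.length + g.primeFactorsList.length := by
      conv_lhs => rw [← hx'g]
      rw [hperm.length_eq, List.length_append]
    have hgnil : g.primeFactorsList ≠ [] := by
      rw [Ne, Nat.primeFactorsList_eq_nil]; omega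
    have := List.length_pos_iff.mpr hgnil
    omega

lemma acm_atomic (hb : 1 < b) : ∀ y, acmMem 1 b y →
    ∃ s : Multiset ℕ, (∀ u ∈ s, acmAtom 1 b u) ∧ s.prod = y := by
  intro y
  induction y using Nat.strong_induction_on with
  | _ y ih =>
    intro hy
    rcases eq_or_ne y 1 with rfl | hy1
    · exact ⟨0, by simp, by simp⟩
    by_cases hatom : acmAtom 1 b y
    · exact ⟨{y}, by simpa using hatom, by simp⟩
    · have hex : ∃ u v, acmMem 1 b u ∧ acmMem 1 b v ∧ y = u * v ∧ u ≠ 1 ∧ v ≠ 1 := by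
        unfold acmAtom at hatom
        push_neg at hatom
        obtain ⟨u, v, hu, hv, heq, hu1, hv1⟩ := hatom hy hy1
        exact ⟨u, v, hu, hv, heq, hu1, hv1⟩
      obtain ⟨u, v, hu, hv, rfl, hu1, hv1⟩ := hex
      have hupos := acm_mem_pos hu
      have hvpos := acm_mem_pos hv
      have hult : u < u * v := (Nat.lt_mul_iff_one_lt_right hupos).mpr (by omega)
      have hvlt : v < u * v := (Nat.lt_mul_iff_one_lt_left hvpos).mpr (by omega)
      obtain ⟨su, hsu, hsup⟩ := ih u hult hu
      obtain ⟨sv, hsv, hsvp⟩ := ih v hvlt hv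
      refine ⟨su + sv, ?_, by simp [hsup, hsvp]⟩
      intro w hw
      rcases Multiset.mem_add.mp hw with h | h
      exacts [hsu w h, hsv w h]

lemma acm_exists_atom (hb : 1 < b) {x p : ℕ} (hx : acmMem 1 b x) (hp : p.Prime)
    (hpx : p ∣ x) : ∃ m, Nat.Coprime m x ∧ acmAtom 1 b (p * m) := by
  have hxmod : x % b = 1 := (acm_mem_iff hb).mp hx
  have hxb : Nat.Coprime b x := by
    unfold Nat.Coprime
    rw [Nat.gcd_rec, hxmod, Nat.gcd_one_left]
  have hbp : Nat.Coprime b p := Nat.Coprime.coprime_dvd_right hpx hxb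
  obtain ⟨c, -, hc⟩ := Nat.exists_mul_mod_eq_one_of_coprime hbp.symm hb
  have hbpx : Nat.Coprime b (p * x) := Nat.Coprime.mul_right hbp hxb
  obtain ⟨w, hw1, hw2⟩ := Nat.chineseRemainder hbpx c 1
  have hp2 := hp.two_le
  have hxpos := acm_mem_pos hx
  have hpx2 : 2 ≤ p * x := by
    calc 2 = 2 * 1 := rfl
    _ ≤ p * x := Nat.mul_le_mul hp2 hxpos
  have hw0 : w % (p * x) = 1 := by
    have := hw2
    unfold Nat.ModEq at this
    rwa [Nat.one_mod_eq_one.mpr (by omega)] at this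
  have hwpos : 0 < w := by
    rcases Nat.eq_zero_or_pos w with rfl | h
    · simp at hw0
    · exact h
  have hwx : Nat.Coprime (p * x) w := by
    unfold Nat.Coprime
    rw [Nat.gcd_rec, hw0, Nat.gcd_one_left]
  have hymem : acmMem 1 b (p * w) := by
    rw [acm_mem_iff hb]
    have : p * w ≡ p * c [MOD b] := Nat.ModEq.mul_left p hw1
    unfold Nat.ModEq at this
    rw [this, hc]
  obtain ⟨s, hsat, hsprod⟩ := acm_atomic hb (p * w) hymem
  have hpdvd : p ∣ s.prod := hsprod ▸ dvd_mul_right p w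
  obtain ⟨u, hu, hpu⟩ := (Nat.Prime.prime hp).exists_mem_multiset_dvd hpdvd
  have huatom := hsat u hu
  have huy : u ∣ p * w := hsprod ▸ Multiset.dvd_prod hu
  obtain ⟨m, rfl⟩ := hpu
  refine ⟨m, ?_, huatom⟩
  have hmw : m ∣ w := (mul_dvd_mul_iff_left (by omega : p ≠ 0)).mp huy
  have hwxc : Nat.Coprime w x :=
    (Nat.Coprime.coprime_dvd_left (dvd_mul_left x p) hwx).symm
  exact Nat.Coprime.coprime_dvd_left hmw hwxc

lemma acm_coprime_prod {x : ℕ} : ∀ m : Multiset ℕ,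
    (∀ u ∈ m, Nat.Coprime x u) → Nat.Coprime x m.prod := by
  intro m hm
  induction m using Multiset.induction with
  | empty => simp
  | cons a t ih =>
    rw [Multiset.prod_cons]
    exact Nat.Coprime.mul_right (hm a (Multiset.mem_cons_self a t))
      (ih fun u hu => hm u (Multiset.mem_cons_of_mem hu))



/-- In a regular ACM `M_{1,b}`, the omega primality of `x` equals the number
of prime factors of `x` counted with multiplicity (`e₁ + ⋯ + e_n`). -/
theorem regular_omega_primality (b : ℕ) (hb : 1 < b) (x : ℕ) (hx : acmMem 1 b x) :
    acmOmega 1 b x = (x.primeFactorsList.length : ℕ∞) := by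
  unfold acmOmega acmBullet
  have hxpos : 0 < x := acm_mem_pos hx
  apply le_antisymm
  · apply sSup_le
    rintro n ⟨s, ⟨hsat, hsdvd, hsmin⟩, rfl⟩
    have hxd : x ∣ s.prod := by
      obtain ⟨k, _, he⟩ := hsdvd
      exact ⟨k, he.symm⟩
    have key := acm_upper (Multiset.card s) x hxpos s rfl
      (fun u hu => by have := acm_mem_pos (hsat u hu).1; omega)
      hxd
      (fun t hts htne hxt => hsmin t hts htne
        ((acm_dvd_iff hb hx (acm_prod_mem hb
          (fun u hu => (hsat u (Multiset.mem_of_le hts hu)).1))).mpr hxt))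
    exact_mod_cast key
  · apply le_sSup
    have hchoice : ∀ p : ℕ, ∃ m, p.Prime → p ∣ x → Nat.Coprime m x ∧ acmAtom 1 b (p * m) := by
      intro p
      by_cases h : p.Prime ∧ p ∣ x
      · obtain ⟨m, h1, h2⟩ := acm_exists_atom hb hx h.1 h.2
        exact ⟨m, fun _ _ => ⟨h1, h2⟩⟩
      · exact ⟨0, fun hp hd => absurd ⟨hp, hd⟩ h⟩
    choose f hf using hchoice
    set L : Multiset ℕ := (x.primeFactorsList : Multiset ℕ) with hL
    set s : Multiset ℕ := L.map (fun p => p * f p) with hs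
    have hmem_s : ∀ u ∈ s, ∃ p, p.Prime ∧ p ∣ x ∧ u = p * f p := by
      intro u hu
      rw [hs, Multiset.mem_map] at hu
      obtain ⟨p, hpL, rfl⟩ := hu
      rw [hL, Multiset.mem_coe] at hpL
      exact ⟨p, Nat.prime_of_mem_primeFactorsList hpL,
        Nat.dvd_of_mem_primeFactorsList hpL, rfl⟩
    have hatoms : ∀ u ∈ s, acmAtom 1 b u := by
      intro u hu
      obtain ⟨p, hp, hpx, rfl⟩ := hmem_s u hu
      exact (hf p hp hpx).2
    set w : ℕ := (L.map f).prod with hw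
    have hsprod : s.prod = x * w := by
      rw [hs, hw]
      have : (L.map fun p => p * f p).prod = (L.map id).prod * (L.map f).prod :=
        Multiset.prod_map_mul
      rw [this, Multiset.map_id, hL, Multiset.prod_coe,
        Nat.prod_primeFactorsList hxpos.ne']
    have hcopw : Nat.Coprime x w := by
      rw [hw]
      apply acm_coprime_prod
      intro u hu
      rw [Multiset.mem_map] at hu
      obtain ⟨p, hpL, rfl⟩ := hu
      rw [hL, Multiset.mem_coe] at hpL
      exact ((hf p (Nat.prime_of_mem_primeFactorsList hpL)
        (Nat.dvd_of_mem_primeFactorsList hpL)).1).symm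
    refine ⟨s, ⟨hatoms, ?_, ?_⟩, ?_⟩
    · rw [acm_dvd_iff hb hx (acm_prod_mem hb fun u hu => (hatoms u hu).1), hsprod]
      exact Dvd.intro w rfl
    · intro t hts htne hdvd
      have hxt : x ∣ t.prod := by
        obtain ⟨k, _, he⟩ := hdvd
        exact ⟨k, he.symm⟩
      obtain ⟨a, hat⟩ := Multiset.lt_iff_cons_le.mp (lt_of_le_of_ne hts htne)
      have has : a ∈ s := Multiset.mem_of_le hat (Multiset.mem_cons_self a t)
      obtain ⟨p, hp, hpx, rfl⟩ := hmem_s a has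
      have h1 : x * (p * f p) ∣ (p * f p ::ₘ t).prod := by
        rw [Multiset.prod_cons, mul_comm x (p * f p)]
        exact mul_dvd_mul_left (p * f p) hxt
      have h2 : (p * f p ::ₘ t).prod ∣ s.prod := Multiset.prod_dvd_prod_of_le hat
      have h3 : x * (p * f p) ∣ x * w := hsprod ▸ h1.trans h2
      have h4 : p ∣ w := by
        have := (Nat.mul_dvd_mul_iff_left hxpos).mp h3
        exact (dvd_mul_right p (f p)).trans this
      exact hp.ne_one
        ((Nat.Coprime.coprime_dvd_left hpx hcopw).eq_one_of_dvd h4)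
    · rw [hs, Multiset.card_map, hL, Multiset.coe_card]
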